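/- The set U = {X ∈ M₂(ℂ) : det(I₂ − X·X̄) > 0 and |det X| < 1} is star-shaped about the origin: if X ∈ U and t ∈ [0,1], then tX ∈ U; in particular det(I₂ − t²·X·X̄) > 0 for all t ∈ [0,1]. -/

import Mathlib

open scoped ComplexOrder

noncomputable section

/-- The underlying real vector space of the Lie algebra `g` (coordinates w.r.t. `E₁,…,E₆`). -/
abbrev GV : Type := Fin 6 → ℝ

/-- The basis vectors `E₁,…,E₆` (indexed by `0,…,5`). -/
def E (i : Fin 6) : GV := Pi.single i 1

/-- The Lie bracket of `g`: the only nonzero brackets of basis vectors are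
`[E₁,E₃] = -E₅`, `[E₂,E₄] = E₅`, `[E₁,E₄] = -E₆`, `[E₂,E₃] = -E₆`. -/
def br (X Y : GV) : GV :=
  ![0, 0, 0, 0,
    -(X 0 * Y 2 - X 2 * Y 0) + (X 1 * Y 3 - X 3 * Y 1),
    -(X 0 * Y 3 - X 3 * Y 0) - (X 1 * Y 2 - X 2 * Y 1)]

/-- `J` is a complex structure: `J ∘ J = -id`. -/
def IsCpxStr (J : Module.End ℝ GV) : Prop := ∀ x, J (J x) = -x

/-- Integrability (Newlander–Nirenberg) condition. -/
def Integrable (J : Module.End ℝ GV) : Prop :=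
  ∀ X Y, br (J X) (J Y) = br X Y + J (br (J X) Y) + J (br X (J Y))

/-- `J` induces the standard orientation of `g`. -/
def PosOrient (J : Module.End ℝ GV) : Prop :=
  ∃ v₁ v₂ v₃ : GV,
    0 < (Matrix.of fun i j => ![v₁, J v₁, v₂, J v₂, v₃, J v₃] i j).det

/-- `C⁺(g)`: integrable complex structures inducing the standard orientation. -/
def Cplus : Set (Module.End ℝ GV) := {J | IsCpxStr J ∧ Integrable J ∧ PosOrient J}

/-- The inner product making `E₁,…,E₆` orthonormal. -/
def inner6 (x y : GV) : ℝ := ∑ i, x i * y i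

def IsOrthog (J : Module.End ℝ GV) : Prop := ∀ x y, inner6 (J x) (J y) = inner6 x y

/-- `C⁺(g,g)`: orthogonal members of `C⁺(g)`. -/
def Cgg : Set (Module.End ℝ GV) := {J | J ∈ Cplus ∧ IsOrthog J}

lemma le46 : (4:ℕ) ≤ 6 := by norm_num

/-- Determinant of `(w̄₁, Ĵw̄₁, w̄₂, Ĵw̄₂)` w.r.t. the basis `(Ē₁,…,Ē₄)` of `g/[g,g]`
(the coordinates of the class of `v` are the first four coordinates of `v`). -/
def hatDet (J : Module.End ℝ GV) (w₁ w₂ : GV) : ℝ :=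
  (Matrix.of fun (i : Fin 4) (j : Fin 4) =>
    ![w₁, J w₁, w₂, J w₂] i (Fin.castLE le46 j)).det

/-- `C₊`: members of `C⁺(g)` whose induced structure on `g/[g,g]` is positively oriented. -/
def CplusP : Set (Module.End ℝ GV) :=
  {J | J ∈ Cplus ∧ ∃ w₁ w₂ : GV, 0 < hatDet J w₁ w₂}

/-- `C₋`: members of `C⁺(g)` whose induced structure on `g/[g,g]` is negatively oriented. -/
def CplusM : Set (Module.End ℝ GV) :=
  {J | J ∈ Cplus ∧ ∃ w₁ w₂ : GV, hatDet J w₁ w₂ < 0}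

/-- `ℂ ⊗ g*`, identified with coordinate vectors with respect to the dual basis `e¹,…,e⁶`. -/
abbrev MC : Type := Fin 6 → ℂ

/-- Evaluation of a complexified 1-form on a vector of `g`. -/
def ev (α : MC) (v : GV) : ℂ := ∑ i, α i * v i

/-- The dual basis `e¹,…,e⁶` inside `ℂ ⊗ g*`. -/
def eC (i : Fin 6) : MC := Pi.single i 1

def w1 : MC := eC 0 + Complex.I • eC 1
def w2 : MC := eC 2 + Complex.I • eC 3
def w3 : MC := eC 4 + Complex.I • eC 5
/-- `ω̄¹` -/
def w1b : MC := eC 0 - Complex.I • eC 1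
/-- `ω̄²` -/
def w2b : MC := eC 2 - Complex.I • eC 3
/-- `ω̄³` -/
def w3b : MC := eC 4 - Complex.I • eC 5

/-- The space of `(1,0)`-forms of `J`, a complex subspace of `ℂ ⊗ g*`. -/
def holSub (J : Module.End ℝ GV) : Submodule ℂ MC where
  carrier := {α | ∀ v : GV, ev α (J v) = Complex.I * ev α v}
  add_mem' := by
    intro a b ha hb v
    simp only [ev, Pi.add_apply, add_mul, Finset.sum_add_distrib] at *
    rw [ha v, hb v]; ring
  zero_mem' := by intro v; simp [ev]
  smul_mem' := by
    intro c α hα v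
    simp only [ev, Pi.smul_apply, smul_eq_mul, mul_assoc, ← Finset.mul_sum] at *
    rw [hα v]; ring
/-- `(α₁, α₂, α₃)` is a basis of the space of `(1,0)`-forms of `J`. -/
def IsHolBasis (J : Module.End ℝ GV) (α₁ α₂ α₃ : MC) : Prop :=
  LinearIndependent ℂ ![α₁, α₂, α₃] ∧ Submodule.span ℂ {α₁, α₂, α₃} = holSub J

/-- Inclusion into the exterior algebra of `ℂ ⊗ g*`; wedge products are multiplications there. -/
def ι : MC →ₗ[ℂ] ExteriorAlgebra ℂ MC := ExteriorAlgebra.ι ℂ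

/-- The standard bi-invariant complex structure `J₀`. -/
def J0 : Module.End ℝ GV :=
  Matrix.mulVecLin !![0,-1,0,0,0,0; 1,0,0,0,0,0; 0,0,0,-1,0,0;
                      0,0,1,0,0,0; 0,0,0,0,0,-1; 0,0,0,0,1,0]

/-- The vector space underlying `V = span(E₁,E₂,E₃,E₄)`. -/
abbrev W4 : Type := Fin 4 → ℝ

/-- Inclusion `V = span(E₁,…,E₄) ↪ g`. -/
def incl (w : W4) : GV := fun i => if h : (i : ℕ) < 4 then w ⟨i, h⟩ else 0

def det4W (v : Fin 4 → W4) : ℝ := (Matrix.of fun i j => v i j).det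

/-- The topology on the space of `ℝ`-linear endomorphisms of `g`
(as a subspace of the space of all maps `g → g`). -/
instance : TopologicalSpace (Module.End ℝ GV) :=
  TopologicalSpace.induced (fun f => (f : GV → GV)) inferInstance

/-- The span of `E₁,E₂,E₃,E₄`. -/
def V4span : Submodule ℝ GV := Submodule.span ℝ {E 0, E 1, E 2, E 3}

/-- The set `U = {X : det(I − X·X̄) > 0, |det X| < 1}`. -/
def U2 : Set (Matrix (Fin 2) (Fin 2) ℂ) :=
  {X | 0 < (1 - X * X.map (starRingEnd ℂ)).det ∧ ‖X.det‖ < 1}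

/-- `U` is star-shaped about the origin. -/
lemma auxReal (s D Tr : ℝ) (hs0 : 0 ≤ s) (hs1 : s ≤ 1) (hD0 : 0 ≤ D) (hD1 : D < 1)
    (h : 0 < 1 - Tr + D) : 0 < 1 - s * Tr + s^2 * D := by
  rcases lt_or_eq_of_le hs1 with h1 | rfl
  · have f1 : 0 < (1 - s) * (1 - s * D) := by
      apply mul_pos (by linarith)
      nlinarith
    have f2 : 0 ≤ s * (1 - Tr + D) := mul_nonneg hs0 h.le
    nlinarith
  · nlinarith

theorem stmt9 (X : Matrix (Fin 2) (Fin 2) ℂ) (hX : X ∈ U2) (t : ℝ)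
    (ht : t ∈ Set.Icc (0:ℝ) 1) :
    (t : ℂ) • X ∈ U2 ∧
      0 < (1 - ((t:ℂ)^2) • (X * X.map (starRingEnd ℂ))).det := by
  obtain ⟨h1, h2⟩ := hX
  obtain ⟨ht0, ht1⟩ := ht
  set M := X * X.map (starRingEnd ℂ) with hM
  have hc : (X.map (starRingEnd ℂ)).det = starRingEnd ℂ X.det := by
    rw [RingHom.map_det]; rfl
  have hDet : M.det = (Complex.normSq X.det : ℂ) := by
    rw [hM, Matrix.det_mul, hc, Complex.mul_conj]
  have hd : M 0 0 * M 1 1 - M 0 1 * M 1 0 = (Complex.normSq X.det : ℂ) := by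
    rw [← hDet, Matrix.det_fin_two]
  set D : ℝ := Complex.normSq X.det with hDdef
  set T : ℂ := M 0 0 + M 1 1 with hT
  have key : ∀ s : ℂ, (1 - s • M).det = 1 - s * T + s^2 * D := by
    intro s
    rw [Matrix.det_fin_two]
    simp only [Matrix.sub_apply, Matrix.smul_apply, Matrix.one_apply, hT, smul_eq_mul]
    norm_num
    linear_combination (s^2 : ℂ) * hd
  have h1' : 0 < 1 - T + (D:ℂ) := by
    have := key 1
    rw [one_smul] at this
    rw [this] at h1
    simpa using h1
  rw [Complex.lt_def] at h1'
  obtain ⟨hre, him⟩ := h1'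
  simp [Complex.add_re, Complex.sub_re, Complex.add_im, Complex.sub_im,
    Complex.ofReal_re, Complex.ofReal_im] at hre him
  have hD0 : 0 ≤ D := Complex.normSq_nonneg _
  have hD1 : D < 1 := by
    rw [hDdef, ← Complex.sq_norm]
    nlinarith [norm_nonneg X.det]
  have main : ∀ s : ℝ, 0 ≤ s → s ≤ 1 → 0 < (1 - ((s:ℝ) : ℂ) • M).det := by
    intro s hs0 hs1
    rw [key]
    have hcast : ((s:ℂ))^2 = ((s^2 : ℝ) : ℂ) := by push_cast; ring
    rw [hcast, Complex.lt_def]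
    constructor
    · simp only [Complex.zero_re, Complex.add_re, Complex.sub_re, Complex.one_re,
        Complex.mul_re, Complex.ofReal_re, Complex.ofReal_im, him, mul_zero, zero_mul,
        sub_zero]
      have := auxReal s D T.re hs0 hs1 hD0 hD1 hre
      linarith
    · simp [Complex.add_im, Complex.sub_im, Complex.mul_im, him]
      left
      rw [hcast]
      exact Complex.ofReal_im _
  constructor
  · constructor
    · have hmap : ((t:ℂ) • X).map (starRingEnd ℂ) = (t:ℂ) • X.map (starRingEnd ℂ) := by
        ext i j
        simp [Matrix.map_apply, Complex.conj_ofReal]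
      have heq : ((t:ℂ) • X) * (((t:ℂ) • X).map (starRingEnd ℂ)) = ((t^2 : ℝ) : ℂ) • M := by
        rw [hmap, smul_mul_assoc, mul_smul_comm, smul_smul]
        push_cast
        ring_nf
        rfl
      rw [heq]
      exact main (t^2) (by positivity) (by nlinarith)
    · rw [Matrix.det_smul]
      simp only [Fintype.card_fin, norm_mul, norm_pow, Complex.norm_real, Real.norm_eq_abs]
      have h3 : |t| ≤ 1 := abs_le.mpr ⟨by linarith, ht1⟩
      have h4 : |t|^2 ≤ 1 := by nlinarith [abs_nonneg t]
      calc |t|^2 * ‖X.det‖ ≤ 1 * ‖X.det‖ :=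
            mul_le_mul_of_nonneg_right h4 (norm_nonneg _)
        _ < 1 := by simpa using h2
  · have : ((t:ℂ)^2) = (((t^2 : ℝ)) : ℂ) := by push_cast; ring
    rw [this]
    exact main (t^2) (by positivity) (by nlinarith)

end
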